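/- The tournament transitivity of the cycle C_n on n vertices equals 1 if n = 3, equals 2 if n ∈ {4, 5}, and equals 3 if n ≥ 6. -/

import Mathlib

open SimpleGraph

variable {V : Type*}

/-- `A` dominates `B` if every vertex of `B` has a neighbour in `A`. -/
def Dominates (G : SimpleGraph V) (A B : Set V) : Prop :=
  ∀ b ∈ B, ∃ a ∈ A, G.Adj a b

/-- An ordered partition `V₁,…,V_k` (encoded as `f : V → Fin k`, surjective,
with `V_i = f ⁻¹' {i}`) is a transitive partition if `V_i` dominates `V_j` for `i < j`. -/
def IsTrPartition (G : SimpleGraph V) {k : ℕ} (f : V → Fin k) : Prop :=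
  Function.Surjective f ∧
    ∀ i j : Fin k, i < j → Dominates G (f ⁻¹' {i}) (f ⁻¹' {j})

/-- Tournament transitive partition: additionally `V_j` does not dominate `V_i` for `i < j`. -/
def IsTTPartition (G : SimpleGraph V) {k : ℕ} (f : V → Fin k) : Prop :=
  Function.Surjective f ∧
    ∀ i j : Fin k, i < j →
      Dominates G (f ⁻¹' {i}) (f ⁻¹' {j}) ∧ ¬ Dominates G (f ⁻¹' {j}) (f ⁻¹' {i})

/-- Transitivity: the maximum size of a transitive partition. -/
noncomputable def Tr (G : SimpleGraph V) : ℕ :=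
  sSup {k | ∃ f : V → Fin k, IsTrPartition G f}

/-- Tournament transitivity: the maximum size of a tournament transitive partition. -/
noncomputable def TTr (G : SimpleGraph V) : ℕ :=
  sSup {k | ∃ f : V → Fin k, IsTTPartition G f}

/-! ### Auxiliary lemmas -/

lemma aux_mod {n a b : ℕ} (hn : 2 ≤ n) (ha : a < n) (hb : b < n) :
    (n - b + a) % n = 1 ↔ (a = b + 1 ∨ (a = 0 ∧ b + 1 = n)) := by
  rcases Nat.lt_trichotomy a b with h | h | h
  · rw [Nat.mod_eq_of_lt (by omega)]; omega
  · subst h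
    rw [show n - a + a = n + 0 by omega, Nat.add_mod_left]
    simp; omega
  · rw [show n - b + a = n + (a - b) by omega, Nat.add_mod_left,
      Nat.mod_eq_of_lt (by omega)]
    omega

lemma cycleAdj {n : ℕ} (hn : 2 ≤ n) {u v : Fin n} :
    (cycleGraph n).Adj u v ↔
      (u.val + 1 = v.val ∨ v.val + 1 = u.val ∨
        (u.val = 0 ∧ v.val + 1 = n) ∨ (v.val = 0 ∧ u.val + 1 = n)) := by
  rw [cycleGraph_adj', Fin.sub_def, Fin.sub_def]
  simp only [aux_mod hn u.isLt v.isLt, aux_mod hn v.isLt u.isLt]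
  omega

/-- decidable reformulation of `IsTTPartition` -/
lemma ttp_iff {n k : ℕ} (G : SimpleGraph (Fin n)) (f : Fin n → Fin k) :
    IsTTPartition G f ↔
      (Function.Surjective f ∧ ∀ i j : Fin k, i < j →
        ((∀ b, f b = j → ∃ a, f a = i ∧ G.Adj a b) ∧
          ¬ ∀ b, f b = i → ∃ a, f a = j ∧ G.Adj a b)) := Iff.rfl

/-- A TT partition of a cycle has at most 3 parts. -/
lemma ttp_le_three {n k : ℕ} (hn : 2 ≤ n) (f : Fin n → Fin k)
    (h : IsTTPartition (cycleGraph n) f) : k ≤ 3 := by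
  by_contra hk
  push_neg at hk
  obtain ⟨hsurj, hdom⟩ := (ttp_iff _ f).mp h
  obtain ⟨v, hv⟩ := hsurj ⟨3, by omega⟩
  have h0 := ((hdom ⟨0, by omega⟩ ⟨3, by omega⟩ (by simp [Fin.lt_def])).1 v hv)
  have h1 := ((hdom ⟨1, by omega⟩ ⟨3, by omega⟩ (by simp [Fin.lt_def])).1 v hv)
  have h2 := ((hdom ⟨2, by omega⟩ ⟨3, by omega⟩ (by simp [Fin.lt_def])).1 v hv)
  obtain ⟨a0, ha0, hadj0⟩ := h0
  obtain ⟨a1, ha1, hadj1⟩ := h1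
  obtain ⟨a2, ha2, hadj2⟩ := h2
  rw [cycleAdj hn] at hadj0 hadj1 hadj2
  have e01 : a0.val ≠ a1.val := fun e => by
    rw [Fin.val_injective e, ha1] at ha0; exact absurd (Fin.mk.injEq .. ▸ ha0) (by simp)
  have e02 : a0.val ≠ a2.val := fun e => by
    rw [Fin.val_injective e, ha2] at ha0; exact absurd (Fin.mk.injEq .. ▸ ha0) (by simp)
  have e12 : a1.val ≠ a2.val := fun e => by
    rw [Fin.val_injective e, ha2] at ha1; exact absurd (Fin.mk.injEq .. ▸ ha1) (by simp)
  have := a0.isLt; have := a1.isLt; have := a2.isLt; have := v.isLt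
  omega

lemma nat_sSup_eq {S : Set ℕ} {m : ℕ} (h1 : m ∈ S) (h2 : ∀ k ∈ S, k ≤ m) :
    sSup S = m :=
  le_antisymm (csSup_le ⟨m, h1⟩ h2) (le_csSup ⟨m, fun k hk => h2 k hk⟩ h1)

/-- the witness partition for large cycles -/
def fBig (m : ℕ) : Fin (6 + m) → Fin 3 := fun v =>
  if v.val = 0 then 1 else if v.val = 1 then 2 else if v.val = 4 then 1 else 0

lemma fBig_eq (m : ℕ) (b : Fin (6 + m)) :
    (fBig m b = 0 ↔ (b.val ≠ 0 ∧ b.val ≠ 1 ∧ b.val ≠ 4)) ∧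
    (fBig m b = 1 ↔ (b.val = 0 ∨ b.val = 4)) ∧
    (fBig m b = 2 ↔ b.val = 1) := by
  unfold fBig
  split_ifs with h1 h2 h3 <;> simp_all

lemma fBig_ttp (m : ℕ) : IsTTPartition (cycleGraph (6 + m)) (fBig m) := by
  have h2n : 2 ≤ 6 + m := by omega
  rw [ttp_iff]
  constructor
  · intro i
    fin_cases i
    · exact ⟨⟨2, by omega⟩, by simp [fBig]⟩
    · exact ⟨⟨0, by omega⟩, by simp [fBig]⟩
    · exact ⟨⟨1, by omega⟩, by simp [fBig]⟩
  · intro i j hij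
    have hi := i.isLt; have hj := j.isLt
    rw [Fin.lt_def] at hij
    have hval : (i.val = 0 ∧ j.val = 1) ∨ (i.val = 0 ∧ j.val = 2) ∨
        (i.val = 1 ∧ j.val = 2) := by omega
    have hfin : ∀ p q : Fin 3, p.val = q.val → p = q := fun p q h => Fin.ext h
    -- replace i j by concrete values
    rcases hval with ⟨hi0, hj0⟩ | ⟨hi0, hj0⟩ | ⟨hi0, hj0⟩
    · -- i = 0, j = 1
      have hieq : i = 0 := Fin.ext hi0
      have hjeq : j = 1 := Fin.ext hj0
      subst hieq hjeq
      constructor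
      · intro b hb
        rcases ((fBig_eq m b).2.1).mp hb with h | h
        · refine ⟨⟨5 + m, by omega⟩, ((fBig_eq m _).1).mpr (by simp; omega), ?_⟩
          rw [cycleAdj h2n]; simp; right; right; exact ⟨by simpa using h, by omega⟩
        · refine ⟨⟨3, by omega⟩, ((fBig_eq m _).1).mpr (by simp), ?_⟩
          rw [cycleAdj h2n]; simp; try omega
      · intro hd
        obtain ⟨a, ha, hadj⟩ := hd ⟨2, by omega⟩ (((fBig_eq m _).1).mpr (by simp))
        rcases ((fBig_eq m a).2.1).mp ha with h | h <;>
          · rw [cycleAdj h2n] at hadj; simp [h] at hadj; try omega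
    · -- i = 0, j = 2
      have hieq : i = 0 := Fin.ext hi0
      have hjeq : j = 2 := Fin.ext hj0
      subst hieq hjeq
      constructor
      · intro b hb
        have h := ((fBig_eq m b).2.2).mp hb
        refine ⟨⟨2, by omega⟩, ((fBig_eq m _).1).mpr (by simp), ?_⟩
        rw [cycleAdj h2n]; simp; try omega
      · intro hd
        obtain ⟨a, ha, hadj⟩ := hd ⟨3, by omega⟩ (((fBig_eq m _).1).mpr (by simp))
        have h := ((fBig_eq m a).2.2).mp ha
        rw [cycleAdj h2n] at hadj; simp [h] at hadj; try omega
    · -- i = 1, j = 2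
      have hieq : i = 1 := Fin.ext hi0
      have hjeq : j = 2 := Fin.ext hj0
      subst hieq hjeq
      constructor
      · intro b hb
        have h := ((fBig_eq m b).2.2).mp hb
        refine ⟨⟨0, by omega⟩, ((fBig_eq m _).2.1).mpr (by simp), ?_⟩
        rw [cycleAdj h2n]; simp; try omega
      · intro hd
        obtain ⟨a, ha, hadj⟩ := hd ⟨4, by omega⟩ (((fBig_eq m _).2.1).mpr (by simp))
        have h := ((fBig_eq m a).2.2).mp ha
        rw [cycleAdj h2n] at hadj; simp [h] at hadj; try omega

lemma no32 : ∀ f : Fin 3 → Fin 2,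
    ¬(Function.Surjective f ∧ ∀ i j : Fin 2, i < j →
      ((∀ b, f b = j → ∃ a, f a = i ∧ (cycleGraph 3).Adj a b) ∧
        ¬ ∀ b, f b = i → ∃ a, f a = j ∧ (cycleGraph 3).Adj a b)) := by decide

lemma no33 : ∀ f : Fin 3 → Fin 3,
    ¬(Function.Surjective f ∧ ∀ i j : Fin 3, i < j →
      ((∀ b, f b = j → ∃ a, f a = i ∧ (cycleGraph 3).Adj a b) ∧
        ¬ ∀ b, f b = i → ∃ a, f a = j ∧ (cycleGraph 3).Adj a b)) := by decide

set_option maxRecDepth 10000 in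
lemma no43 : ∀ f : Fin 4 → Fin 3,
    ¬(Function.Surjective f ∧ ∀ i j : Fin 3, i < j →
      ((∀ b, f b = j → ∃ a, f a = i ∧ (cycleGraph 4).Adj a b) ∧
        ¬ ∀ b, f b = i → ∃ a, f a = j ∧ (cycleGraph 4).Adj a b)) := by decide

set_option maxRecDepth 10000 in
lemma no53 : ∀ f : Fin 5 → Fin 3,
    ¬(Function.Surjective f ∧ ∀ i j : Fin 3, i < j →
      ((∀ b, f b = j → ∃ a, f a = i ∧ (cycleGraph 5).Adj a b) ∧
        ¬ ∀ b, f b = i → ∃ a, f a = j ∧ (cycleGraph 5).Adj a b)) := by decide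

lemma yes31 : ∃ f : Fin 3 → Fin 1,
    (Function.Surjective f ∧ ∀ i j : Fin 1, i < j →
      ((∀ b, f b = j → ∃ a, f a = i ∧ (cycleGraph 3).Adj a b) ∧
        ¬ ∀ b, f b = i → ∃ a, f a = j ∧ (cycleGraph 3).Adj a b)) := by decide

lemma yes42 : ∃ f : Fin 4 → Fin 2,
    (Function.Surjective f ∧ ∀ i j : Fin 2, i < j →
      ((∀ b, f b = j → ∃ a, f a = i ∧ (cycleGraph 4).Adj a b) ∧
        ¬ ∀ b, f b = i → ∃ a, f a = j ∧ (cycleGraph 4).Adj a b)) := by decide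

set_option maxRecDepth 10000 in
lemma yes52 : ∃ f : Fin 5 → Fin 2,
    (Function.Surjective f ∧ ∀ i j : Fin 2, i < j →
      ((∀ b, f b = j → ∃ a, f a = i ∧ (cycleGraph 5).Adj a b) ∧
        ¬ ∀ b, f b = i → ∃ a, f a = j ∧ (cycleGraph 5).Adj a b)) := by decide

theorem stmt_8 (n : ℕ) :
    (n = 3 → TTr (cycleGraph n) = 1) ∧
    (n = 4 ∨ n = 5 → TTr (cycleGraph n) = 2) ∧
    (6 ≤ n → TTr (cycleGraph n) = 3) := by
  refine ⟨?_, ?_, ?_⟩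
  · rintro rfl
    apply nat_sSup_eq
    · obtain ⟨f, hf⟩ := yes31
      exact ⟨f, (ttp_iff _ f).mpr hf⟩
    · rintro k ⟨f, hf⟩
      have h3 := ttp_le_three (by norm_num) f hf
      rw [ttp_iff] at hf
      interval_cases k
      · omega
      · omega
      · exact absurd hf (no32 f)
      · exact absurd hf (no33 f)
  · rintro (rfl | rfl) <;>
    · apply nat_sSup_eq
      · first
        | (obtain ⟨f, hf⟩ := yes42; exact ⟨f, (ttp_iff _ f).mpr hf⟩)
        | (obtain ⟨f, hf⟩ := yes52; exact ⟨f, (ttp_iff _ f).mpr hf⟩)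
      · rintro k ⟨f, hf⟩
        have h3 := ttp_le_three (by norm_num) f hf
        rw [ttp_iff] at hf
        by_contra hk
        have hk3 : k = 3 := by omega
        subst hk3
        first
        | exact absurd hf (no43 f)
        | exact absurd hf (no53 f)
  · intro hn
    obtain ⟨m, rfl⟩ : ∃ m, n = 6 + m := ⟨n - 6, by omega⟩
    apply nat_sSup_eq
    · exact ⟨fBig m, fBig_ttp m⟩
    · rintro k ⟨f, hf⟩
      exact ttp_le_three (by omega) f hf
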